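/- If E‖ζ^j‖² ≤ S for all j ≥ 0 and λ ∈ [0,1), then E‖Σ_{j=0}^{t-1}(P - W^{t-1-j})ζ^j‖² ≤ S/(1-λ)² ≤ S/(1-λ) · 1/(1-λ), and in particular the consensus error satisfies (1/m)Σᵢ E‖x^t(i) - x̄^t‖² ≤ S/(m(1-λ)²). -/

import Mathlib

open MeasureTheory

/-- The Frobenius norm of a real matrix. -/
noncomputable def frobNorm {m d : ℕ} (A : Matrix (Fin m) (Fin d) ℝ) : ℝ :=
  Real.sqrt (∑ i, ∑ j, (A i j) ^ 2)

namespace ConsensusAux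

variable {m d : ℕ}

lemma frobNorm_nonneg (A : Matrix (Fin m) (Fin d) ℝ) : 0 ≤ frobNorm A :=
  Real.sqrt_nonneg _

lemma frob_sq (A : Matrix (Fin m) (Fin d) ℝ) :
    frobNorm A ^ 2 = ∑ i, ∑ j, (A i j) ^ 2 := by
  have h : 0 ≤ ∑ i, ∑ j, (A i j) ^ 2 := by positivity
  simpa [frobNorm] using Real.sq_sqrt h

/-- The matrix flattened to a Euclidean vector, as a linear map. -/
noncomputable def toE : Matrix (Fin m) (Fin d) ℝ →ₗ[ℝ] EuclideanSpace ℝ (Fin m × Fin d) where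
  toFun A := (WithLp.equiv 2 _).symm fun p => A p.1 p.2
  map_add' := fun _ _ => rfl
  map_smul' := fun _ _ => rfl

lemma frob_eq_norm (A : Matrix (Fin m) (Fin d) ℝ) : frobNorm A = ‖toE A‖ := by
  rw [EuclideanSpace.norm_eq, frobNorm]
  congr 1
  simp [toE, Real.norm_eq_abs, sq_abs, WithLp.equiv_symm_apply, PiLp.toLp_apply, Fintype.sum_prod_type]

lemma frob_sum_le {ι : Type*} (s : Finset ι) (A : ι → Matrix (Fin m) (Fin d) ℝ) :
    frobNorm (∑ j ∈ s, A j) ≤ ∑ j ∈ s, frobNorm (A j) := by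
  simp only [frob_eq_norm, map_sum]
  exact norm_sum_le _ _

lemma frob_neg (A : Matrix (Fin m) (Fin d) ℝ) : frobNorm (-A) = frobNorm A := by
  simp [frobNorm]

/-- A column of a matrix, as a Euclidean vector. -/
noncomputable def colE (A : Matrix (Fin m) (Fin d) ℝ) (j : Fin d) :
    EuclideanSpace ℝ (Fin m) :=
  (WithLp.equiv 2 _).symm fun i => A i j

lemma colE_norm_sq (A : Matrix (Fin m) (Fin d) ℝ) (j : Fin d) :
    ‖colE A j‖ ^ 2 = ∑ i, (A i j) ^ 2 := by
  rw [EuclideanSpace.norm_eq]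
  have h : 0 ≤ ∑ i, ‖colE A j i‖ ^ 2 := by positivity
  rw [Real.sq_sqrt h]
  simp [colE, Real.norm_eq_abs, sq_abs, WithLp.equiv_symm_apply, PiLp.toLp_apply]

lemma frob_sq_eq_sum_col (A : Matrix (Fin m) (Fin d) ℝ) :
    frobNorm A ^ 2 = ∑ j, ‖colE A j‖ ^ 2 := by
  rw [frob_sq, Finset.sum_comm]
  simp [colE_norm_sq]

lemma colE_mul (A : Matrix (Fin m) (Fin m) ℝ) (B : Matrix (Fin m) (Fin d) ℝ) (j : Fin d) :
    colE (A * B) j = Matrix.toEuclideanCLM (𝕜 := ℝ) (n := Fin m) A (colE B j) := by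
  have h : (fun i => (A * B) i j) = Matrix.toLin' A (fun i => B i j) := by
    funext i
    simp [Matrix.mul_apply, Matrix.toLin'_apply, Matrix.mulVec, dotProduct]
  rw [colE, colE, WithLp.equiv_symm_apply, Matrix.toEuclideanCLM_toLp, ← Matrix.toLin'_apply, ← h]

lemma frob_mul_le (A : Matrix (Fin m) (Fin m) ℝ) (B : Matrix (Fin m) (Fin d) ℝ) :
    frobNorm (A * B) ≤ ‖Matrix.toEuclideanCLM (𝕜 := ℝ) (n := Fin m) A‖ * frobNorm B := by
  have hA : (0 : ℝ) ≤ ‖Matrix.toEuclideanCLM (𝕜 := ℝ) (n := Fin m) A‖ := norm_nonneg _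
  have hsq : frobNorm (A * B) ^ 2 ≤
      (‖Matrix.toEuclideanCLM (𝕜 := ℝ) (n := Fin m) A‖ * frobNorm B) ^ 2 := by
    rw [frob_sq_eq_sum_col, mul_pow, frob_sq_eq_sum_col, Finset.mul_sum]
    apply Finset.sum_le_sum
    intro j _
    rw [colE_mul, ← mul_pow]
    have := ContinuousLinearMap.le_opNorm
      (Matrix.toEuclideanCLM (𝕜 := ℝ) (n := Fin m) A) (colE B j)
    exact pow_le_pow_left₀ (norm_nonneg _) this 2
  calc frobNorm (A * B) = Real.sqrt (frobNorm (A * B) ^ 2) :=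
        (Real.sqrt_sq (frobNorm_nonneg _)).symm
      _ ≤ Real.sqrt ((‖Matrix.toEuclideanCLM (𝕜 := ℝ) (n := Fin m) A‖ * frobNorm B) ^ 2) :=
        Real.sqrt_le_sqrt hsq
      _ = ‖Matrix.toEuclideanCLM (𝕜 := ℝ) (n := Fin m) A‖ * frobNorm B :=
        Real.sqrt_sq (mul_nonneg hA (frobNorm_nonneg _))

/-- Sum of integrals of nonnegative functions dominated (in total) by an integrable `g`. -/
lemma sum_integral_le {Ω : Type*} [MeasurableSpace Ω] {μ : Measure Ω} {ι : Type*}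
    (s : Finset ι) (f : ι → Ω → ℝ) (g : Ω → ℝ)
    (hf : ∀ i ω, 0 ≤ f i ω) (hg : Integrable g μ)
    (hle : ∀ ω, ∑ i ∈ s, f i ω ≤ g ω) :
    ∑ i ∈ s, ∫ ω, f i ω ∂μ ≤ ∫ ω, g ω ∂μ := by
  classical
  set u := s.filter (fun i => Integrable (f i) μ) with hu
  have husub : u ⊆ s := Finset.filter_subset _ _
  have h1 : ∑ i ∈ s, ∫ ω, f i ω ∂μ = ∑ i ∈ u, ∫ ω, f i ω ∂μ := by
    rw [hu, Finset.sum_filter]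
    apply Finset.sum_congr rfl
    intro i _
    by_cases hi : Integrable (f i) μ
    · simp [hi]
    · simp [hi, integral_undef hi]
  rw [h1, ← integral_finset_sum u (fun i hi => (Finset.mem_filter.mp hi).2)]
  apply integral_mono_of_nonneg
  · exact Filter.Eventually.of_forall fun ω => Finset.sum_nonneg fun i _ => hf i ω
  · exact hg
  · apply Filter.Eventually.of_forall
    intro ω
    calc ∑ i ∈ u, f i ω ≤ ∑ i ∈ s, f i ω :=
          Finset.sum_le_sum_of_subset_of_nonneg husub fun i _ _ => hf i ω
      _ ≤ g ω := hle ω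

lemma geom_sum_le_inv {lam : ℝ} (hlam0 : 0 ≤ lam) (hlam1 : lam < 1) (t : ℕ) :
    ∑ k ∈ Finset.range t, lam ^ k ≤ (1 - lam)⁻¹ := by
  have h : 0 < 1 - lam := by linarith
  have hg := geom_sum_mul lam t
  have hpow : 0 ≤ lam ^ t := pow_nonneg hlam0 t
  rw [inv_eq_one_div, le_div_iff₀ h]
  nlinarith [hg]

end ConsensusAux

/-- If `E‖ζ^j‖² ≤ S` for all `j` and `λ ∈ [0,1)`, then
`E‖Σ_{j<t}(P - W^{t-1-j})ζ^j‖² ≤ S/(1-λ)²`, and the consensus error satisfies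
`(1/m)Σᵢ E‖x^t(i) - x̄^t‖² ≤ S/(m(1-λ)²)`. -/
theorem consensus_error_second_moment_bound {m d : ℕ} (hm : 0 < m)
    {Ω : Type*} [MeasurableSpace Ω] (μ : Measure Ω) [IsProbabilityMeasure μ]
    (W P : Matrix (Fin m) (Fin m) ℝ) (lam S : ℝ)
    (hlam0 : 0 ≤ lam) (hlam1 : lam < 1) (hS : 0 ≤ S)
    (hP : P = Matrix.of fun _ _ => 1 / (m : ℝ))
    (hWP : W * P = P) (hPW : P * W = P)
    (hop : ∀ k : ℕ, ‖Matrix.toEuclideanCLM (𝕜 := ℝ) (n := Fin m) (W ^ k - P)‖ ≤ lam ^ k)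
    (X ζ : ℕ → Ω → Matrix (Fin m) (Fin d) ℝ)
    (hX0 : ∀ ω, X 0 ω = 0)
    (hrec : ∀ t ω, X (t + 1) ω = W * X t ω - ζ t ω)
    (hint : ∀ j, Integrable (fun ω => frobNorm (ζ j ω) ^ 2) μ)
    (hζ : ∀ j, ∫ ω, frobNorm (ζ j ω) ^ 2 ∂μ ≤ S)
    (t : ℕ) :
    (∫ ω, frobNorm (∑ j ∈ Finset.range t, (P - W ^ (t - 1 - j)) * ζ j ω) ^ 2 ∂μ
        ≤ S / (1 - lam) ^ 2) ∧
      (1 / (m : ℝ)) * ∑ i : Fin m,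
          ∫ ω, (∑ j : Fin d, ((X t ω - P * X t ω) i j) ^ 2) ∂μ
        ≤ S / ((m : ℝ) * (1 - lam) ^ 2) := by
  classical
  have h1m : (0:ℝ) < 1 - lam := by linarith
  set g : Ω → ℝ := fun ω =>
    (1 - lam)⁻¹ * ∑ j ∈ Finset.range t, lam ^ (t - 1 - j) * frobNorm (ζ j ω) ^ 2 with hg
  have hgint : Integrable g μ := by
    apply Integrable.const_mul
    exact integrable_finset_sum _ fun j _ => (hint j).const_mul _
  have hpoint : ∀ ω,
      frobNorm (∑ j ∈ Finset.range t, (P - W ^ (t - 1 - j)) * ζ j ω) ^ 2 ≤ g ω := by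
    intro ω
    have h1 : frobNorm (∑ j ∈ Finset.range t, (P - W ^ (t - 1 - j)) * ζ j ω)
        ≤ ∑ j ∈ Finset.range t, lam ^ (t - 1 - j) * frobNorm (ζ j ω) := by
      refine (ConsensusAux.frob_sum_le _ _).trans (Finset.sum_le_sum ?_)
      intro j _
      have hneg : (P - W ^ (t - 1 - j)) * ζ j ω = -((W ^ (t - 1 - j) - P) * ζ j ω) := by
        rw [← Matrix.neg_mul, neg_sub]
      rw [hneg, ConsensusAux.frob_neg]
      calc frobNorm ((W ^ (t - 1 - j) - P) * ζ j ω)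
          ≤ ‖Matrix.toEuclideanCLM (𝕜 := ℝ) (n := Fin m) (W ^ (t - 1 - j) - P)‖ *
              frobNorm (ζ j ω) := ConsensusAux.frob_mul_le _ _
        _ ≤ lam ^ (t - 1 - j) * frobNorm (ζ j ω) :=
            mul_le_mul_of_nonneg_right (hop _) (ConsensusAux.frobNorm_nonneg _)
    have h2 : frobNorm (∑ j ∈ Finset.range t, (P - W ^ (t - 1 - j)) * ζ j ω) ^ 2
        ≤ (∑ j ∈ Finset.range t, lam ^ (t - 1 - j) * frobNorm (ζ j ω)) ^ 2 :=
      pow_le_pow_left₀ (ConsensusAux.frobNorm_nonneg _) h1 2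
    have h3 : (∑ j ∈ Finset.range t, lam ^ (t - 1 - j) * frobNorm (ζ j ω)) ^ 2
        ≤ (∑ j ∈ Finset.range t, lam ^ (t - 1 - j)) *
          ∑ j ∈ Finset.range t, lam ^ (t - 1 - j) * frobNorm (ζ j ω) ^ 2 := by
      apply Finset.sum_sq_le_sum_mul_sum_of_sq_eq_mul
      · intro j _; positivity
      · intro j _
        have := ConsensusAux.frobNorm_nonneg (ζ j ω)
        positivity
      · intro j _; ring
    have h4 : (∑ j ∈ Finset.range t, lam ^ (t - 1 - j)) ≤ (1 - lam)⁻¹ := by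
      rw [Finset.sum_range_reflect (fun j => lam ^ j) t]
      exact ConsensusAux.geom_sum_le_inv hlam0 hlam1 t
    have h5 : 0 ≤ ∑ j ∈ Finset.range t, lam ^ (t - 1 - j) * frobNorm (ζ j ω) ^ 2 :=
      Finset.sum_nonneg fun j _ => mul_nonneg (pow_nonneg hlam0 _) (sq_nonneg _)
    calc frobNorm (∑ j ∈ Finset.range t, (P - W ^ (t - 1 - j)) * ζ j ω) ^ 2
        ≤ (∑ j ∈ Finset.range t, lam ^ (t - 1 - j) * frobNorm (ζ j ω)) ^ 2 := h2
      _ ≤ (∑ j ∈ Finset.range t, lam ^ (t - 1 - j)) *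
          ∑ j ∈ Finset.range t, lam ^ (t - 1 - j) * frobNorm (ζ j ω) ^ 2 := h3
      _ ≤ g ω := mul_le_mul_of_nonneg_right h4 h5
  have hIg : ∫ ω, g ω ∂μ ≤ S / (1 - lam) ^ 2 := by
    have e1 : ∫ ω, g ω ∂μ = (1 - lam)⁻¹ * ∑ j ∈ Finset.range t,
        lam ^ (t - 1 - j) * ∫ ω, frobNorm (ζ j ω) ^ 2 ∂μ := by
      rw [hg]
      rw [integral_const_mul, integral_finset_sum _ (fun j _ => (hint j).const_mul _)]
      congr 1
      exact Finset.sum_congr rfl fun j _ => integral_const_mul _ _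
    rw [e1]
    have h6 : ∑ j ∈ Finset.range t, lam ^ (t - 1 - j) * ∫ ω, frobNorm (ζ j ω) ^ 2 ∂μ
        ≤ ∑ j ∈ Finset.range t, lam ^ (t - 1 - j) * S :=
      Finset.sum_le_sum fun j _ => mul_le_mul_of_nonneg_left (hζ j) (pow_nonneg hlam0 _)
    have h7 : ∑ j ∈ Finset.range t, lam ^ (t - 1 - j) * S ≤ (1 - lam)⁻¹ * S := by
      rw [← Finset.sum_mul]
      refine mul_le_mul_of_nonneg_right ?_ hS
      rw [Finset.sum_range_reflect (fun j => lam ^ j) t]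
      exact ConsensusAux.geom_sum_le_inv hlam0 hlam1 t
    calc (1 - lam)⁻¹ * ∑ j ∈ Finset.range t,
          lam ^ (t - 1 - j) * ∫ ω, frobNorm (ζ j ω) ^ 2 ∂μ
        ≤ (1 - lam)⁻¹ * ((1 - lam)⁻¹ * S) :=
          mul_le_mul_of_nonneg_left (h6.trans h7) (by positivity)
      _ = S / (1 - lam) ^ 2 := by
          rw [sq, div_eq_mul_inv, mul_inv]
          ring
  have part1 : ∫ ω, frobNorm (∑ j ∈ Finset.range t, (P - W ^ (t - 1 - j)) * ζ j ω) ^ 2 ∂μ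
      ≤ S / (1 - lam) ^ 2 := by
    refine le_trans ?_ hIg
    exact integral_mono_of_nonneg (Filter.Eventually.of_forall fun ω => sq_nonneg _) hgint
      (Filter.Eventually.of_forall hpoint)
  have hXt : ∀ (s : ℕ) ω, X s ω = -∑ j ∈ Finset.range s, W ^ (s - 1 - j) * ζ j ω := by
    intro s
    induction s with
    | zero => intro ω; simp [hX0]
    | succ n ih =>
      intro ω
      rw [hrec n ω, ih ω, Finset.sum_range_succ]
      have he : ∀ j ∈ Finset.range n,
          W ^ (n + 1 - 1 - j) * ζ j ω = W * (W ^ (n - 1 - j) * ζ j ω) := by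
        intro j hj
        have hj' : j < n := Finset.mem_range.mp hj
        have hexp : n + 1 - 1 - j = (n - 1 - j) + 1 := by omega
        rw [hexp, pow_succ', Matrix.mul_assoc]
      rw [Finset.sum_congr rfl he, ← Matrix.mul_sum]
      have hz : n + 1 - 1 - n = 0 := by omega
      rw [hz, pow_zero, Matrix.one_mul, Matrix.mul_neg]
      abel
  have hPWk : ∀ k : ℕ, P * W ^ k = P := by
    intro k
    induction k with
    | zero => simp
    | succ n ih => rw [pow_succ, ← Matrix.mul_assoc, ih, hPW]
  have hXid : ∀ ω, X t ω - P * X t ω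
      = ∑ j ∈ Finset.range t, (P - W ^ (t - 1 - j)) * ζ j ω := by
    intro ω
    have hterm : ∀ j ∈ Finset.range t, (P - W ^ (t - 1 - j)) * ζ j ω
        = P * (W ^ (t - 1 - j) * ζ j ω) - W ^ (t - 1 - j) * ζ j ω := by
      intro j _
      rw [Matrix.sub_mul, ← Matrix.mul_assoc, hPWk]
    rw [Finset.sum_congr rfl hterm, Finset.sum_sub_distrib, ← Matrix.mul_sum, hXt t ω,
      Matrix.mul_neg, sub_neg_eq_add]
    abel
  refine ⟨part1, ?_⟩
  have h2 : ∑ i : Fin m, ∫ ω, (∑ j : Fin d, ((X t ω - P * X t ω) i j) ^ 2) ∂μ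
      ≤ S / (1 - lam) ^ 2 := by
    simp only [hXid]
    refine le_trans (ConsensusAux.sum_integral_le Finset.univ
      (fun i ω => ∑ j : Fin d,
        ((∑ j' ∈ Finset.range t, (P - W ^ (t - 1 - j')) * ζ j' ω) i j) ^ 2)
      g (fun i ω => Finset.sum_nonneg fun j _ => sq_nonneg _) hgint ?_) hIg
    intro ω
    calc ∑ i : Fin m, ∑ j : Fin d,
          ((∑ j' ∈ Finset.range t, (P - W ^ (t - 1 - j')) * ζ j' ω) i j) ^ 2
        = frobNorm (∑ j' ∈ Finset.range t, (P - W ^ (t - 1 - j')) * ζ j' ω) ^ 2 :=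
          (ConsensusAux.frob_sq _).symm
      _ ≤ g ω := hpoint ω
  have hm0 : (0:ℝ) < (m:ℝ) := Nat.cast_pos.mpr hm
  have hrw : S / ((m : ℝ) * (1 - lam) ^ 2) = (1 / (m : ℝ)) * (S / (1 - lam) ^ 2) := by
    rw [one_div, div_eq_mul_inv, div_eq_mul_inv, mul_inv]
    ring
  rw [hrw]
  exact mul_le_mul_of_nonneg_left h2 (by positivity)
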